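/- For integers $N \ge 0$, $m \ge 0$ and real $p$ with $0 < p < 1$, the monic Krawtchouk polynomial of degree $N+1+m$, defined by $\check{P}^{\text{monic}}_n(x) = \sum_{k=0}^n (-N+k)_{n-k} \frac{(-n)_k(-x)_k}{k!} p^{n-k}$ (where $(a)_j$ is the Pochhammer symbol), factorises as $\check{P}^{\text{monic}}_{N+1+m}(x) = \prod_{k=0}^{N}(x-k) \cdot \sum_{k=0}^m (N+2+k)_{m-k} \frac{(-m)_k(-x+N+1)_k}{k!} p^{m-k}$, as polynomials in $x$. -/

import Mathlib

/-- Rising Pochhammer symbol `(a)_j = a(a+1)⋯(a+j-1)`. -/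
noncomputable def poch (a : ℝ) (j : ℕ) : ℝ := ∏ i ∈ Finset.range j, (a + i)

/-- Monic Krawtchouk polynomial
`P^monic_n(x) = ∑_{k=0}^n (-N+k)_{n-k} (-n)_k (-x)_k / k! · p^{n-k}`. -/
noncomputable def krawMonic (N : ℕ) (p : ℝ) (n : ℕ) (x : ℝ) : ℝ :=
  ∑ k ∈ Finset.range (n + 1),
    poch ((k : ℝ) - N) (n - k) * poch (-(n : ℝ)) k * poch (-x) k / (Nat.factorial k) *
      p ^ (n - k)

lemma poch_add (a : ℝ) (s t : ℕ) : poch a (s + t) = poch a s * poch (a + s) t := by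
  unfold poch
  rw [Finset.prod_range_add]
  congr 1
  refine Finset.prod_congr rfl fun i _ => ?_
  push_cast
  ring

lemma factorial_poch (a t : ℕ) :
    ((a + t).factorial : ℝ) = (a.factorial : ℝ) * poch ((a : ℝ) + 1) t := by
  induction t with
  | zero => simp [poch]
  | succ t ih =>
    have : a + (t + 1) = (a + t) + 1 := by omega
    rw [this, Nat.factorial_succ]
    push_cast
    rw [ih]
    unfold poch
    rw [Finset.prod_range_succ]
    push_cast
    ring

lemma poch_neg_flip (s t : ℕ) :
    poch (-((s : ℝ) + t)) t = (-1) ^ t * poch ((s : ℝ) + 1) t := by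
  unfold poch
  rw [← Finset.prod_range_reflect (fun i => (-((s : ℝ) + t) + i)) t]
  rw [show ((-1 : ℝ)) ^ t = ∏ _i ∈ Finset.range t, (-1 : ℝ) by simp, ← Finset.prod_mul_distrib]
  refine Finset.prod_congr rfl fun i hi => ?_
  rw [Finset.mem_range] at hi
  have : ((t - 1 - i : ℕ) : ℝ) = (t : ℝ) - 1 - i := by
    have h1 : (1 : ℝ) + i ≤ t := by exact_mod_cast Nat.one_add_le_iff.mpr hi
    push_cast [Nat.cast_sub (by omega : i ≤ t - 1), Nat.cast_sub (by omega : 1 ≤ t)]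
    ring
  rw [this]
  ring

lemma poch_neg_x (x : ℝ) (t : ℕ) :
    poch (-x) t = (-1) ^ t * ∏ k ∈ Finset.range t, (x - k) := by
  unfold poch
  rw [show ((-1 : ℝ)) ^ t = ∏ _i ∈ Finset.range t, (-1 : ℝ) by simp, ← Finset.prod_mul_distrib]
  exact Finset.prod_congr rfl fun i _ => by ring

lemma poch_eq_zero (k N t : ℕ) (hk : k ≤ N) (ht : N - k < t) :
    poch ((k : ℝ) - N) t = 0 := by
  unfold poch
  refine Finset.prod_eq_zero (Finset.mem_range.mpr ht) ?_
  have : ((N - k : ℕ) : ℝ) = (N : ℝ) - k := by push_cast [hk]; ring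
  rw [this]; ring

lemma key (N m i : ℕ) (h : i ≤ m) :
    poch ((i : ℝ) + 1) (m - i) * poch ((m : ℝ) + 1) (N + 1) * (i.factorial : ℝ) =
      poch ((N : ℝ) + 2 + i) (m - i) * ((N + 1 + i).factorial : ℝ) := by
  have h1 : ((m : ℝ)) = ((i + (m - i) : ℕ) : ℝ) := by push_cast [Nat.add_sub_cancel' h]; ring
  have e1 : (i.factorial : ℝ) * poch ((i : ℝ) + 1) (m - i) = (m.factorial : ℝ) := by
    rw [show (m.factorial : ℝ) = ((i + (m - i)).factorial : ℝ) by rw [Nat.add_sub_cancel' h]]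
    rw [factorial_poch]
  have e2 : (m.factorial : ℝ) * poch ((m : ℝ) + 1) (N + 1) = ((m + (N + 1)).factorial : ℝ) :=
    (factorial_poch m (N + 1)).symm
  have e3 : ((N + 1 + i).factorial : ℝ) * poch (((N + 1 + i : ℕ) : ℝ) + 1) (m - i) =
      (((N + 1 + i) + (m - i)).factorial : ℝ) := (factorial_poch (N + 1 + i) (m - i)).symm
  have hc : ((N : ℝ) + 2 + i) = (((N + 1 + i : ℕ) : ℝ) + 1) := by push_cast; ring
  have hn : (N + 1 + i) + (m - i) = m + (N + 1) := by omega
  calc poch ((i : ℝ) + 1) (m - i) * poch ((m : ℝ) + 1) (N + 1) * (i.factorial : ℝ)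
      = (i.factorial : ℝ) * poch ((i : ℝ) + 1) (m - i) * poch ((m : ℝ) + 1) (N + 1) := by ring
    _ = ((m + (N + 1)).factorial : ℝ) := by rw [e1, e2]
    _ = poch ((N : ℝ) + 2 + i) (m - i) * ((N + 1 + i).factorial : ℝ) := by
        rw [hc, ← hn, ← e3]; ring

/-- Diophantine factorisation of the monic Krawtchouk polynomial at
degree `N+1+m`. -/
theorem krawtchouk_monic_factorisation (N m : ℕ) (p : ℝ) (hp : 0 < p) (hp1 : p < 1) (x : ℝ) :
    krawMonic N p (N + 1 + m) x =
      (∏ k ∈ Finset.range (N + 1), (x - k)) *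
        ∑ k ∈ Finset.range (m + 1),
          poch ((N : ℝ) + 2 + k) (m - k) * poch (-(m : ℝ)) k * poch (-x + N + 1) k /
              (Nat.factorial k) * p ^ (m - k) := by
  unfold krawMonic
  rw [show N + 1 + m + 1 = (N + 1) + (m + 1) from by omega, Finset.sum_range_add,
    Finset.mul_sum]
  have hz : ∀ k ∈ Finset.range (N + 1),
      poch ((k : ℝ) - N) (N + 1 + m - k) * poch (-((N + 1 + m : ℕ) : ℝ)) k * poch (-x) k /
        (Nat.factorial k) * p ^ (N + 1 + m - k) = 0 := by
    intro k hk
    rw [Finset.mem_range] at hk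
    rw [poch_eq_zero k N _ (by omega) (by omega)]
    ring
  rw [Finset.sum_congr rfl hz, Finset.sum_const, smul_zero, zero_add]
  refine Finset.sum_congr rfl fun i hi => ?_
  rw [Finset.mem_range] at hi
  have him : i ≤ m := by omega
  have hsub : N + 1 + m - (N + 1 + i) = m - i := by omega
  rw [hsub]
  have hc1 : ((N + 1 + i : ℕ) : ℝ) - N = (i : ℝ) + 1 := by push_cast; ring
  rw [hc1]
  have hsplit1 : poch (-((N + 1 + m : ℕ) : ℝ)) (N + 1 + i) =
      ((-1) ^ (N + 1) * poch ((m : ℝ) + 1) (N + 1)) * poch (-(m : ℝ)) i := by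
    rw [show N + 1 + i = (N + 1) + i from rfl, poch_add]
    have h1 : -((N + 1 + m : ℕ) : ℝ) = -((m : ℝ) + ((N + 1 : ℕ) : ℝ)) := by push_cast; ring
    have h2 : -((N + 1 + m : ℕ) : ℝ) + ((N + 1 : ℕ) : ℝ) = -(m : ℝ) := by push_cast; ring
    rw [h2, h1, poch_neg_flip m (N + 1)]
  have hsplit2 : poch (-x) (N + 1 + i) =
      ((-1) ^ (N + 1) * ∏ k ∈ Finset.range (N + 1), (x - k)) * poch (-x + N + 1) i := by
    rw [show N + 1 + i = (N + 1) + i from rfl, poch_add, poch_neg_x]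
    have : -x + ((N + 1 : ℕ) : ℝ) = -x + N + 1 := by push_cast; ring
    rw [this]
  rw [hsplit1, hsplit2]
  have hfac : ((N + 1 + i).factorial : ℝ) ≠ 0 := by exact_mod_cast (N + 1 + i).factorial_ne_zero
  have hfaci : ((i).factorial : ℝ) ≠ 0 := by exact_mod_cast (i).factorial_ne_zero
  have hk := key N m i him
  have hsq : ((-1 : ℝ)) ^ (N * 2) = 1 := Even.neg_one_pow ⟨N, by omega⟩
  field_simp
  linear_combination (poch (-(m : ℝ)) i * poch (-x + N + 1) i *
      ((-1 : ℝ) ^ (N * 2)) * (∏ k ∈ Finset.range (N + 1), (x - k))) * hk +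
    (poch (-(m : ℝ)) i * (∏ k ∈ Finset.range (N + 1), (x - k)) * poch (-x + N + 1) i *
      poch ((N : ℝ) + 2 + i) (m - i) * ((N + 1 + i).factorial : ℝ)) * hsq
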